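/- arXiv:1109.3843 — 2 statements merged into one kernel-verified Lean document; each statement's English description precedes it below -/
import Mathlib

section
/- If ‖I_d − UᵀΠᵀΠU‖₂ ≤ ε < 1 and Ψ = ΠU has SVD Ψ = U_Ψ Σ_Ψ V_Ψᵀ, then ‖I_d − Σ_Ψ^{-2}‖₂ ≤ ε/(1−ε). -/
open Matrix

open scoped Matrix.Norms.L2Operator

lemma aux_entry_le {m d : ℕ} (A : Matrix (Fin m) (Fin d) ℝ) (i : Fin m) (j : Fin d) :
    |A i j| ≤ ‖A‖ := by
  have h := A.l2_opNorm_mulVec ((WithLp.equiv 2 (Fin d → ℝ)).symm (Pi.single j 1))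
  have hnx : ‖(WithLp.equiv 2 (Fin d → ℝ)).symm (Pi.single j 1)‖ = 1 := by
    simpa using EuclideanSpace.norm_single (𝕜 := ℝ) j 1
  rw [hnx, mul_one] at h
  replace h : ‖(EuclideanSpace.equiv (Fin m) ℝ).symm (A *ᵥ Pi.single j 1)‖ ≤ ‖A‖ := h
  refine le_trans ?_ h
  have : A *ᵥ Pi.single j 1 = fun i => A i j := by
    ext i; simp [mulVec_single]
  rw [this]
  have hle : |(fun i => A i j) i| ≤
      ‖(EuclideanSpace.equiv (Fin m) ℝ).symm (fun i => A i j)‖ := by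
    rw [EuclideanSpace.norm_eq]
    rw [← Real.sqrt_sq (abs_nonneg _)]
    apply Real.sqrt_le_sqrt
    rw [sq_abs]
    have := Finset.single_le_sum (f := fun k => ((fun i => A i j) k)^2)
      (fun k _ => sq_nonneg _) (Finset.mem_univ i)
    simpa [sq_abs] using this
  simpa using hle

lemma aux_diag_le {d : ℕ} (v : Fin d → ℝ) (c : ℝ) (hc : 0 ≤ c) (h : ∀ i, |v i| ≤ c) :
    ‖Matrix.diagonal v‖ ≤ c := by
  rw [Matrix.l2_opNorm_def]
  refine ContinuousLinearMap.opNorm_le_bound _ hc fun x => ?_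
  show ‖toEuclideanLin (Matrix.diagonal v) x‖ ≤ c * ‖x‖
  rw [toEuclideanLin_apply]
  rw [EuclideanSpace.norm_eq]
  have hxn : ‖x‖ = Real.sqrt (∑ i, ‖(WithLp.equiv 2 (Fin d → ℝ)) x i‖ ^ 2) :=
    EuclideanSpace.norm_eq x
  rw [hxn, ← Real.sqrt_sq hc, ← Real.sqrt_mul (sq_nonneg c)]
  apply Real.sqrt_le_sqrt
  rw [Finset.mul_sum]
  apply Finset.sum_le_sum
  intro i _
  simp only [mulVec_diagonal, Real.norm_eq_abs]
  calc |v i * (WithLp.equiv 2 (Fin d → ℝ)) x i| ^ 2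
      = (v i)^2 * |(WithLp.equiv 2 (Fin d → ℝ)) x i|^2 := by
        rw [abs_mul, mul_pow]; rw [sq_abs (v i)]
    _ ≤ c^2 * |(WithLp.equiv 2 (Fin d → ℝ)) x i|^2 := by
        apply mul_le_mul_of_nonneg_right _ (sq_nonneg _)
        calc (v i)^2 = |v i|^2 := (sq_abs _).symm
          _ ≤ c^2 := by apply pow_le_pow_left₀ (abs_nonneg _) (h i)

theorem singular_values_inverse_bound {n d r : ℕ}
    (U : Matrix (Fin n) (Fin d) ℝ) (Pi : Matrix (Fin r) (Fin n) ℝ)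
    (UPsi : Matrix (Fin r) (Fin d) ℝ) (SPsi VPsi : Matrix (Fin d) (Fin d) ℝ)
    (ε : ℝ) (hε0 : 0 < ε) (hε1 : ε < 1)
    (hU : Uᵀ * U = 1)
    (h : ‖(1 : Matrix (Fin d) (Fin d) ℝ) - Uᵀ * Piᵀ * Pi * U‖ ≤ ε)
    (hSVD : Pi * U = UPsi * SPsi * VPsiᵀ)
    (hUPsi : UPsiᵀ * UPsi = 1) (hVPsi : VPsiᵀ * VPsi = 1)
    (hdiag : SPsi.IsDiag) (hpos : ∀ i, 0 < SPsi i i) :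
    ‖(1 : Matrix (Fin d) (Fin d) ℝ) - SPsi⁻¹ * SPsi⁻¹‖ ≤ ε / (1 - ε) := by
  -- SPsi as diagonal
  have hS : SPsi = Matrix.diagonal (fun i => SPsi i i) := by
    ext i j
    by_cases hij : i = j
    · subst hij; simp
    · simp [Matrix.diagonal, hij, hdiag hij]
  have hSt : SPsiᵀ = SPsi := by
    rw [hS]; exact Matrix.diagonal_transpose _
  -- V orthogonal both sides
  have hVV : VPsi * VPsiᵀ = 1 := mul_eq_one_comm.mp hVPsi
  -- UᵀΠᵀΠU = V Σ² Vᵀ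
  have hUPsi' : ∀ X : Matrix (Fin d) (Fin d) ℝ, UPsiᵀ * (UPsi * X) = X := fun X => by
    rw [← Matrix.mul_assoc, hUPsi, Matrix.one_mul]
  have hVPsi' : ∀ X : Matrix (Fin d) (Fin d) ℝ, VPsiᵀ * (VPsi * X) = X := fun X => by
    rw [← Matrix.mul_assoc, hVPsi, Matrix.one_mul]
  have hVV' : ∀ X : Matrix (Fin d) (Fin d) ℝ, VPsi * (VPsiᵀ * X) = X := fun X => by
    rw [← Matrix.mul_assoc, hVV, Matrix.one_mul]
  have key : Uᵀ * Piᵀ * Pi * U = VPsi * (SPsi * SPsi) * VPsiᵀ := by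
    have h1 : Uᵀ * Piᵀ * Pi * U = (Pi * U)ᵀ * (Pi * U) := by
      rw [Matrix.transpose_mul, Matrix.mul_assoc]
    rw [h1, hSVD]
    simp only [Matrix.transpose_mul, Matrix.transpose_transpose, hSt, Matrix.mul_assoc,
      hUPsi', hVPsi', hUPsi, hVPsi, mul_one]
  -- norms of V, Vᵀ are ≤ 1
  have hVt : VPsiᴴ = VPsiᵀ := Matrix.conjTranspose_eq_transpose_of_trivial VPsi
  have hone : ‖(1 : Matrix (Fin d) (Fin d) ℝ)‖ ≤ 1 := by
    rw [Matrix.cstar_norm_def, _root_.map_one]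
    exact ContinuousLinearMap.norm_id_le
  have hnV : ‖VPsi‖ ≤ 1 := by
    have hc := Matrix.l2_opNorm_conjTranspose_mul_self VPsi
    rw [hVt, hVPsi] at hc
    nlinarith [norm_nonneg VPsi]
  have hnVt : ‖VPsiᵀ‖ ≤ 1 := by
    rw [← hVt, Matrix.l2_opNorm_conjTranspose]; exact hnV
  -- ‖1 - Σ²‖ ≤ ε
  have hmid : VPsiᵀ * ((1 : Matrix (Fin d) (Fin d) ℝ) - Uᵀ * Piᵀ * Pi * U) * VPsi
      = (1 : Matrix (Fin d) (Fin d) ℝ) - SPsi * SPsi := by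
    rw [key, Matrix.mul_sub, Matrix.sub_mul, Matrix.mul_one]
    simp only [Matrix.mul_assoc, hVPsi', hVPsi, mul_one]
  have hS2 : ‖(1 : Matrix (Fin d) (Fin d) ℝ) - SPsi * SPsi‖ ≤ ε := by
    rw [← hmid]
    calc ‖VPsiᵀ * ((1 : Matrix (Fin d) (Fin d) ℝ) - Uᵀ * Piᵀ * Pi * U) * VPsi‖
        ≤ ‖VPsiᵀ * ((1 : Matrix (Fin d) (Fin d) ℝ) - Uᵀ * Piᵀ * Pi * U)‖ * ‖VPsi‖ :=
          Matrix.l2_opNorm_mul _ _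
      _ ≤ ‖VPsiᵀ‖ * ‖(1 : Matrix (Fin d) (Fin d) ℝ) - Uᵀ * Piᵀ * Pi * U‖ * ‖VPsi‖ := by
          apply mul_le_mul_of_nonneg_right (Matrix.l2_opNorm_mul _ _) (norm_nonneg _)
      _ ≤ 1 * ε * 1 := by
          apply mul_le_mul _ hnV (norm_nonneg _) (by positivity)
          apply mul_le_mul hnVt h (norm_nonneg _) zero_le_one
      _ = ε := by ring
  -- entrywise bounds
  have hent : ∀ i, |1 - SPsi i i ^ 2| ≤ ε := by
    intro i
    have := aux_entry_le ((1 : Matrix (Fin d) (Fin d) ℝ) - SPsi * SPsi) i i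
    refine le_trans ?_ (le_trans this hS2)
    apply le_of_eq
    congr 1
    rw [hS]
    simp [Matrix.diagonal_mul_diagonal, sq]
  -- SPsi⁻¹
  have hinv : SPsi⁻¹ = Matrix.diagonal (fun i => (SPsi i i)⁻¹) := by
    apply Matrix.inv_eq_right_inv
    have hone : SPsi * Matrix.diagonal (fun i => (SPsi i i)⁻¹) = 1 := by
      nth_rewrite 1 [hS]
      rw [Matrix.diagonal_mul_diagonal]
      ext i j
      by_cases hij : i = j
      · subst hij; simp [mul_inv_cancel₀ (hpos i).ne']
      · simp [Matrix.diagonal_apply_ne _ hij, Matrix.one_apply_ne hij]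
    exact hone
  have hfin : (1 : Matrix (Fin d) (Fin d) ℝ) - SPsi⁻¹ * SPsi⁻¹
      = Matrix.diagonal (fun i => 1 - ((SPsi i i)^2)⁻¹) := by
    rw [hinv, Matrix.diagonal_mul_diagonal]
    ext i j
    by_cases hij : i = j
    · subst hij; simp [Matrix.diagonal, sq]
    · simp [Matrix.diagonal, hij, Matrix.one_apply_ne hij]
  rw [hfin]
  apply aux_diag_le
  · exact div_nonneg hε0.le (by linarith)
  · intro i
    have hσ := hpos i
    have hσ2 : (1:ℝ) - ε ≤ SPsi i i ^ 2 := by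
      have := abs_le.mp (hent i)
      linarith [this.2]
    have hσ2pos : (0:ℝ) < SPsi i i ^ 2 := by positivity
    rw [abs_le]
    have hne : (1:ℝ) - ε > 0 := by linarith
    constructor
    · have h1 : ((SPsi i i)^2)⁻¹ ≤ (1 - ε)⁻¹ := by
        apply inv_anti₀ hne hσ2
      have h6 : (1:ℝ) - (1-ε)⁻¹ = -(ε/(1-ε)) := by
        field_simp
        ring
      linarith [h6 ▸ sub_le_sub_left h1 1]
    · have hσ2hi : SPsi i i ^ 2 ≤ 1 + ε := by linarith [(abs_le.mp (hent i)).1]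
      have h4 : (1+ε)⁻¹ ≤ ((SPsi i i)^2)⁻¹ := inv_anti₀ hσ2pos hσ2hi
      have h6 : (1:ℝ) - (1+ε)⁻¹ = ε/(1+ε) := by
        field_simp
        ring
      have h7 : ε/(1+ε) ≤ ε/(1-ε) := by gcongr <;> linarith
      linarith
end

section
/- If A = UΣVᵀ is the thin SVD of a rank-d matrix A ∈ ℝ^{n×d} and Π ∈ ℝ^{r×n} is such that ΠU has rank d, then (ΠA)⁺ = VΣ^{-1}(ΠU)⁺. -/
open Matrix

def IsMoorePenrose {m n : ℕ} (A : Matrix (Fin m) (Fin n) ℝ) (Ap : Matrix (Fin n) (Fin m) ℝ) : Prop :=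
  A * Ap * A = A ∧ Ap * A * Ap = Ap ∧ (A * Ap)ᵀ = A * Ap ∧ (Ap * A)ᵀ = Ap * A

/-- The Moore–Penrose pseudoinverse is unique. -/
lemma mp_unique {m n : ℕ} {A : Matrix (Fin m) (Fin n) ℝ} {X Y : Matrix (Fin n) (Fin m) ℝ}
    (hX : IsMoorePenrose A X) (hY : IsMoorePenrose A Y) : X = Y := by
  obtain ⟨hX1, hX2, hX3, hX4⟩ := hX
  obtain ⟨hY1, hY2, hY3, hY4⟩ := hY
  have key : A * X = (A * Y) * (A * X) := by
    conv_lhs => rw [← hY1]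
    simp only [Matrix.mul_assoc]
  have key' : A * X = (A * X) * (A * Y) := by
    have h := congrArg transpose key
    rwa [hX3, transpose_mul, hX3, hY3] at h
  have hAX : A * X = A * Y := by
    rw [key']
    have e : (A * X) * (A * Y) = (A * X * A) * Y := by simp only [Matrix.mul_assoc]
    rw [e, hX1]
  have key2 : X * A = (X * A) * (Y * A) := by
    conv_lhs => rw [← hY1]
    simp only [Matrix.mul_assoc]
  have key2' : X * A = (Y * A) * (X * A) := by
    have h := congrArg transpose key2
    rwa [hX4, transpose_mul, hX4, hY4] at h
  have hXA : X * A = Y * A := by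
    rw [key2']
    have e : (Y * A) * (X * A) = Y * (A * X * A) := by simp only [Matrix.mul_assoc]
    rw [e, hX1]
  calc X = X * A * X := hX2.symm
  _ = Y * A * X := by rw [hXA]
  _ = Y * (A * X) := by rw [Matrix.mul_assoc]
  _ = Y * (A * Y) := by rw [hAX]
  _ = Y * A * Y := by rw [Matrix.mul_assoc]
  _ = Y := hY2

/-- A square matrix of full rank is a unit. -/
lemma isUnit_of_rank_eq {d : ℕ} (P : Matrix (Fin d) (Fin d) ℝ) (h : P.rank = d) : IsUnit P := by
  rw [← Matrix.mulVec_surjective_iff_isUnit]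
  have htop : LinearMap.range P.mulVecLin = ⊤ := by
    apply Submodule.eq_top_of_finrank_eq
    rw [← Matrix.rank, h]
    simp
  have hsurj := LinearMap.range_eq_top.mp htop
  intro y
  obtain ⟨x, hx⟩ := hsurj y
  exact ⟨x, by simpa using hx⟩

theorem pinv_of_sketch {n d r : ℕ}
    (A U : Matrix (Fin n) (Fin d) ℝ) (S V : Matrix (Fin d) (Fin d) ℝ)
    (Pi : Matrix (Fin r) (Fin n) ℝ)
    (PiAp : Matrix (Fin d) (Fin r) ℝ) (PiUp : Matrix (Fin d) (Fin r) ℝ)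
    (hrank : A.rank = d)
    (hSVD : A = U * S * Vᵀ) (hU : Uᵀ * U = 1)
    (hV : Vᵀ * V = 1) (hV' : V * Vᵀ = 1)
    (hS : Invertible S)
    (hrankPiU : (Pi * U).rank = d)
    (h1 : IsMoorePenrose (Pi * A) PiAp)
    (h2 : IsMoorePenrose (Pi * U) PiUp) :
    PiAp = V * S⁻¹ * PiUp := by
  obtain ⟨hB1, hB2, hB3, hB4⟩ := h2
  set B := Pi * U with hBdef
  -- PiUp * B = 1
  have hrankP : (PiUp * B).rank = d := by
    refine le_antisymm ((PiUp * B).rank_le_width) ?_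
    calc d = B.rank := hrankPiU.symm
    _ = (B * (PiUp * B)).rank := by rw [← Matrix.mul_assoc, hB1]
    _ ≤ (PiUp * B).rank := Matrix.rank_mul_le_right _ _
  have hUnit : IsUnit (PiUp * B) := isUnit_of_rank_eq _ hrankP
  obtain ⟨u, hu⟩ := hUnit
  have hidem : (PiUp * B) * (PiUp * B) = PiUp * B := by
    have e : (PiUp * B) * (PiUp * B) = PiUp * (B * PiUp * B) := by
      simp only [Matrix.mul_assoc]
    rw [e, hB1]
  have hinv : (↑u⁻¹ : Matrix (Fin d) (Fin d) ℝ) * (PiUp * B) = 1 := by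
    rw [← hu]; exact_mod_cast u.inv_mul
  have hid : PiUp * B = 1 := by
    calc PiUp * B = (↑u⁻¹ * (PiUp * B)) * (PiUp * B) := by rw [hinv, one_mul]
    _ = ↑u⁻¹ * ((PiUp * B) * (PiUp * B)) := by rw [Matrix.mul_assoc]
    _ = ↑u⁻¹ * (PiUp * B) := by rw [hidem]
    _ = 1 := hinv
  haveI := hS
  have hSinv : S⁻¹ * S = 1 := Matrix.inv_mul_of_invertible S
  have hSinv' : S * S⁻¹ = 1 := Matrix.mul_inv_of_invertible S
  -- generic cancellation lemmas
  have hVV : ∀ {k : ℕ} (X : Matrix (Fin d) (Fin k) ℝ), Vᵀ * (V * X) = X :=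
    fun X => by rw [← Matrix.mul_assoc, hV, Matrix.one_mul]
  have hSS' : ∀ {k : ℕ} (X : Matrix (Fin d) (Fin k) ℝ), S * (S⁻¹ * X) = X :=
    fun X => by rw [← Matrix.mul_assoc, hSinv', Matrix.one_mul]
  have hS'S : ∀ {k : ℕ} (X : Matrix (Fin d) (Fin k) ℝ), S⁻¹ * (S * X) = X :=
    fun X => by rw [← Matrix.mul_assoc, hSinv, Matrix.one_mul]
  have hPBX : ∀ {k : ℕ} (X : Matrix (Fin d) (Fin k) ℝ), PiUp * (B * X) = X :=
    fun X => by rw [← Matrix.mul_assoc, hid, Matrix.one_mul]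
  have hPiA : Pi * A = B * S * Vᵀ := by rw [hSVD, hBdef]; simp only [Matrix.mul_assoc]
  -- the candidate satisfies the Moore–Penrose conditions
  have hcand : IsMoorePenrose (Pi * A) (V * S⁻¹ * PiUp) := by
    rw [hPiA]
    refine ⟨?_, ?_, ?_, ?_⟩
    · simp only [Matrix.mul_assoc]
      rw [hVV, hSS', hPBX]
    · simp only [Matrix.mul_assoc]
      rw [hVV, hSS', hPBX]
    · have e3 : B * S * Vᵀ * (V * S⁻¹ * PiUp) = B * PiUp := by
        simp only [Matrix.mul_assoc]
        rw [hVV, hSS']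
      rw [e3, hB3]
    · have e4 : V * S⁻¹ * PiUp * (B * S * Vᵀ) = 1 := by
        simp only [Matrix.mul_assoc]
        rw [hPBX, hS'S, hV']
      rw [e4]
      simp
  exact mp_unique h1 hcand
end
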